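/- arXiv:2509.14580 — 4 statements merged into one kernel-verified Lean document; each statement's English description precedes it below -/
import Mathlib

section
/- For all integers n ≥ 1 and real t with 0 < t < π/2, the ratio of consecutive Bessel functions satisfies t/(2(n+1)) ≤ J_{n+1}(t)/J_n(t) ≤ t/(2n+1). -/
/-- Bessel function of the first kind of (nonnegative integer) order `n`. -/
noncomputable def besselJ (n : ℕ) (t : ℝ) : ℝ :=
  ∑' m : ℕ, ((-1 : ℝ) ^ m * (t / 2) ^ (2 * m + n)) /
    ((m.factorial : ℝ) * ((m + n).factorial : ℝ))

namespace BesselAux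

noncomputable def bterm (n : ℕ) (t : ℝ) (m : ℕ) : ℝ :=
  ((-1 : ℝ) ^ m * (t / 2) ^ (2 * m + n)) /
    ((m.factorial : ℝ) * ((m + n).factorial : ℝ))

lemma besselJ_eq (n : ℕ) (t : ℝ) : besselJ n t = ∑' m, bterm n t m := rfl

lemma summable_bterm (n : ℕ) (t : ℝ) : Summable (bterm n t) := by
  apply Summable.of_norm
  have hbound : ∀ m : ℕ, ‖bterm n t m‖ ≤ |t/2| ^ n * ((|t/2| ^ 2) ^ m / m.factorial) := by
    intro m
    have h1 : ‖bterm n t m‖ = |t/2| ^ (2*m+n) / ((m.factorial : ℝ) * ((m + n).factorial : ℝ)) := by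
      rw [bterm, Real.norm_eq_abs, abs_div, abs_mul, abs_pow, abs_pow, abs_neg, abs_one,
        one_pow, one_mul, abs_mul, Nat.abs_cast, Nat.abs_cast]
    rw [h1]
    have h2 : |t/2| ^ (2*m+n) = |t/2| ^ n * (|t/2| ^ 2) ^ m := by
      rw [← pow_mul, ← pow_add]; ring_nf
    rw [h2, mul_div_assoc]
    apply mul_le_mul_of_nonneg_left _ (by positivity)
    apply div_le_div_of_nonneg_left (by positivity) (by positivity)
    have h3 : (1:ℝ) ≤ ((m+n).factorial : ℝ) := by
      exact_mod_cast (m+n).factorial_pos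
    have hm : (0:ℝ) < (m.factorial : ℝ) := by exact_mod_cast m.factorial_pos
    nlinarith
  exact Summable.of_nonneg_of_le (fun m => norm_nonneg _) hbound
    ((Real.summable_pow_div_factorial (|t/2|^2)).mul_left _)

lemma tsum_pair_nonneg (f : ℕ → ℝ) (hf : Summable f)
    (h : ∀ k, 0 ≤ f (2*k) + f (2*k+1)) : 0 ≤ ∑' m, f m := by
  have he : Summable fun k => f (2*k) := hf.comp_injective (fun a b => by omega)
  have ho : Summable fun k => f (2*k+1) := hf.comp_injective (fun a b => by omega)
  rw [← tsum_even_add_odd he ho, ← Summable.tsum_add he ho]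
  exact tsum_nonneg h

lemma tsum_pair_pos (f : ℕ → ℝ) (hf : Summable f)
    (h : ∀ k, 0 ≤ f (2*k) + f (2*k+1)) (h0 : 0 < f 0 + f 1) : 0 < ∑' m, f m := by
  have he : Summable fun k => f (2*k) := hf.comp_injective (fun a b => by omega)
  have ho : Summable fun k => f (2*k+1) := hf.comp_injective (fun a b => by omega)
  rw [← tsum_even_add_odd he ho, ← Summable.tsum_add he ho]
  refine Summable.tsum_pos (he.add ho) h 0 ?_
  simpa using h0

lemma key_div_le (u A B D E : ℝ) (hu0 : 0 ≤ u) (hu1 : u ≤ 1) (e : ℕ)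
    (hB : 0 ≤ B) (hD : 0 < D) (hE : 0 < E) (h : B * D ≤ A * E) :
    B * u ^ (e+2) / E ≤ A * u ^ e / D := by
  rw [div_le_div_iff₀ hE hD]
  have h1 : u ^ (e+2) = u ^ e * u ^ 2 := by ring
  have h2 : u ^ 2 ≤ 1 := by nlinarith
  have h3 : (0:ℝ) ≤ u ^ e := pow_nonneg hu0 e
  have h4 : 0 ≤ B * D := mul_nonneg hB hD.le
  nlinarith [mul_le_mul_of_nonneg_left h h3, mul_le_mul_of_nonneg_left h2 (mul_nonneg h4 h3)]

lemma besselJ_pos (n : ℕ) (t : ℝ) (ht0 : 0 < t) (ht2 : t < 2) : 0 < besselJ n t := by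
  rw [besselJ_eq]
  have hu0 : (0:ℝ) ≤ t/2 := by linarith
  have hu0' : (0:ℝ) < t/2 := by linarith
  have hu1 : t/2 ≤ 1 := by linarith
  have hu1' : t/2 < 1 := by linarith
  have hpair : ∀ k, 0 ≤ bterm n t (2*k) + bterm n t (2*k+1) := by
    intro k
    have he : (-1:ℝ) ^ (2*k) = 1 := by rw [pow_mul]; norm_num
    have ho : (-1:ℝ) ^ (2*k+1) = -1 := by rw [pow_succ, pow_mul]; norm_num
    have h2k : bterm n t (2*k)
        = (t/2) ^ (2*(2*k)+n) / ((2*k).factorial * ((2*k) + n).factorial : ℝ) := by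
      rw [bterm, he, one_mul]
    have h2k1 : bterm n t (2*k+1)
        = -((t/2) ^ (2*(2*k+1)+n) / ((2*k+1).factorial * ((2*k+1) + n).factorial : ℝ)) := by
      rw [bterm, ho, neg_one_mul, neg_div]
    rw [h2k, h2k1]
    have hle : (t/2) ^ (2*(2*k+1)+n) / ((2*k+1).factorial * ((2*k+1) + n).factorial : ℝ)
        ≤ (t/2) ^ (2*(2*k)+n) / ((2*k).factorial * ((2*k) + n).factorial : ℝ) := by
      have e1 : 2*(2*k+1)+n = (2*(2*k)+n) + 2 := by ring
      rw [e1]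
      have h3 : ((2*k).factorial * ((2*k)+n).factorial : ℕ)
          ≤ ((2*k+1).factorial * ((2*k+1)+n).factorial : ℕ) :=
        Nat.mul_le_mul (Nat.factorial_le (by omega)) (Nat.factorial_le (by omega))
      have h4 : (((2*k).factorial * ((2*k)+n).factorial : ℕ) : ℝ)
          ≤ (((2*k+1).factorial * ((2*k+1)+n).factorial : ℕ) : ℝ) := Nat.cast_le.mpr h3
      have := key_div_le (t/2) 1 1 (((2*k).factorial * ((2*k) + n).factorial : ℕ) : ℝ)
        (((2*k+1).factorial * ((2*k+1) + n).factorial : ℕ) : ℝ) hu0 hu1 (2*(2*k)+n)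
        zero_le_one (by positivity) (by positivity) (by simpa using h4)
      push_cast at this
      simpa using this
    linarith
  apply tsum_pair_pos _ (summable_bterm n t) hpair
  have h0 : bterm n t 0 = (t/2) ^ n / (n.factorial : ℝ) := by
    rw [bterm]; norm_num
  have h1 : bterm n t 1 = -((t/2) ^ (2+n) / ((1 + n).factorial : ℝ)) := by
    rw [bterm]; norm_num [neg_div]
  rw [h0, h1]
  have hnum : (t/2) ^ (2+n) < (t/2) ^ n := by
    have e1 : (t/2) ^ (2+n) = (t/2)^2 * (t/2)^n := by ring
    have h2 : (t/2)^2 < 1 := by nlinarith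
    have h3 : (0:ℝ) < (t/2)^n := pow_pos hu0' n
    nlinarith
  have hfac : (n.factorial : ℝ) ≤ ((1+n).factorial : ℝ) := by
    exact_mod_cast Nat.factorial_le (by omega)
  have hfp : (0:ℝ) < (n.factorial : ℝ) := by exact_mod_cast n.factorial_pos
  have hstep : (t/2) ^ (2+n) / ((1 + n).factorial : ℝ) < (t/2) ^ n / (n.factorial : ℝ) := by
    calc (t/2) ^ (2+n) / ((1 + n).factorial : ℝ) ≤ (t/2) ^ (2+n) / (n.factorial : ℝ) := by
          apply div_le_div_of_nonneg_left (by positivity) hfp hfac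
      _ < (t/2) ^ n / (n.factorial : ℝ) := by gcongr
  linarith

end BesselAux

namespace BesselAux

lemma fact_ne (k : ℕ) : ((k.factorial : ℝ)) ≠ 0 :=
  Nat.cast_ne_zero.mpr k.factorial_ne_zero

lemma point_upper (n : ℕ) (t : ℝ) (m : ℕ) :
    t * bterm n t m - (2*(n:ℝ)+1) * bterm (n+1) t m
      = (-1:ℝ)^m * ((2*(m:ℝ)+1) * (t/2)^(2*m+n+1) / (m.factorial * (m+n+1).factorial)) := by
  rw [bterm, bterm]
  have e1 : 2*m+(n+1) = (2*m+n)+1 := by ring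
  have e2 : m + (n+1) = (m+n)+1 := by ring
  rw [e1, e2]
  simp only [pow_succ, Nat.factorial_succ]
  have h1 := fact_ne m
  have h2 := fact_ne (m+n)
  push_cast
  field_simp
  ring

lemma point_lower (n : ℕ) (t : ℝ) (m : ℕ) :
    2*((n:ℝ)+1) * bterm (n+1) t m - t * bterm n t m
      = (-1:ℝ)^(m+1) * (2*(m:ℝ) * (t/2)^(2*m+n+1) / (m.factorial * (m+n+1).factorial)) := by
  rw [bterm, bterm]
  have e1 : 2*m+(n+1) = (2*m+n)+1 := by ring
  have e2 : m + (n+1) = (m+n)+1 := by ring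
  rw [e1, e2]
  simp only [pow_succ, Nat.factorial_succ]
  have h1 := fact_ne m
  have h2 := fact_ne (m+n)
  push_cast
  field_simp
  ring

end BesselAux

namespace BesselAux

/-- magnitude term for the upper bound series -/
noncomputable def gU (n : ℕ) (t : ℝ) (m : ℕ) : ℝ :=
  (2*(m:ℝ)+1) * (t/2)^(2*m+n+1) / (m.factorial * (m+n+1).factorial)

/-- magnitude term for the lower bound series -/
noncomputable def gL (n : ℕ) (t : ℝ) (m : ℕ) : ℝ :=
  2*(m:ℝ) * (t/2)^(2*m+n+1) / (m.factorial * (m+n+1).factorial)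

lemma gU_dec (n : ℕ) (hn : 1 ≤ n) (t : ℝ) (hu0 : (0:ℝ) ≤ t/2) (hu1 : t/2 ≤ 1) (m : ℕ) :
    gU n t (m+1) ≤ gU n t m := by
  rw [gU, gU]
  have e1 : 2*(m+1)+n+1 = (2*m+n+1)+2 := by ring
  have e2 : (m+1)+n+1 = (m+n+1)+1 := by ring
  rw [e1, e2]
  have hkey : (2*(m+1)+1) * (m.factorial * (m+n+1).factorial)
      ≤ (2*m+1) * ((m+1).factorial * ((m+n+1)+1).factorial) := by
    rw [Nat.factorial_succ, Nat.factorial_succ]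
    have h3 : 3 ≤ (m+1)*((m+n+1)+1) :=
      le_trans (by omega : 3 ≤ (m+n+1)+1) (Nat.le_mul_of_pos_left _ (by omega))
    have h : 2*(m+1)+1 ≤ (2*m+1) * ((m+1)*((m+n+1)+1)) :=
      le_trans (by omega : 2*(m+1)+1 ≤ (2*m+1)*3) (Nat.mul_le_mul_left _ h3)
    calc (2*(m+1)+1) * (m.factorial * (m+n+1).factorial)
        ≤ ((2*m+1) * ((m+1)*((m+n+1)+1))) * (m.factorial * (m+n+1).factorial) :=
          Nat.mul_le_mul_right _ h
      _ = (2*m+1) * ((m+1) * m.factorial * (((m+n+1)+1) * (m+n+1).factorial)) := by ring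
  have hc : ((2*(m+1)+1 : ℕ) : ℝ) * ((m.factorial * (m+n+1).factorial : ℕ) : ℝ)
      ≤ ((2*m+1 : ℕ) : ℝ) * (((m+1).factorial * ((m+n+1)+1).factorial : ℕ) : ℝ) := by
    rw [← Nat.cast_mul, ← Nat.cast_mul]; exact_mod_cast hkey
  have := key_div_le (t/2) ((2*m+1 : ℕ) : ℝ) ((2*(m+1)+1 : ℕ) : ℝ)
    ((m.factorial * (m+n+1).factorial : ℕ) : ℝ)
    (((m+1).factorial * ((m+n+1)+1).factorial : ℕ) : ℝ) hu0 hu1 (2*m+n+1)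
    (by positivity) (by positivity) (by positivity) hc
  push_cast at this
  convert this using 2 <;> push_cast <;> ring

lemma gL_dec (n : ℕ) (t : ℝ) (hu0 : (0:ℝ) ≤ t/2) (hu1 : t/2 ≤ 1) (m : ℕ) :
    gL n t (m+2) ≤ gL n t (m+1) := by
  rw [gL, gL]
  have e1 : 2*(m+2)+n+1 = (2*(m+1)+n+1)+2 := by ring
  have e2 : (m+2)+n+1 = ((m+1)+n+1)+1 := by ring
  have e3 : (m+2) = (m+1)+1 := rfl
  rw [e1, e2, e3]
  have hkey : (2*((m+1)+1)) * ((m+1).factorial * ((m+1)+n+1).factorial)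
      ≤ (2*(m+1)) * (((m+1)+1).factorial * (((m+1)+n+1)+1).factorial) := by
    rw [Nat.factorial_succ, Nat.factorial_succ]
    have hX : ((m+1)+1) ≤ ((m+1)+1)*(((m+1)+n+1)+1) := Nat.le_mul_of_pos_right _ (by omega)
    have h1 : 2*((m+1)+1) ≤ (2*(m+1)) * ((m+1)+1) :=
      Nat.mul_le_mul (by omega : 2 ≤ 2*(m+1)) (le_refl ((m+1)+1))
    have h : 2*((m+1)+1) ≤ (2*(m+1)) * (((m+1)+1)*(((m+1)+n+1)+1)) :=
      le_trans h1 (Nat.mul_le_mul_left _ hX)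
    calc (2*((m+1)+1)) * ((m+1).factorial * ((m+1)+n+1).factorial)
        ≤ ((2*(m+1)) * (((m+1)+1)*(((m+1)+n+1)+1))) * ((m+1).factorial * ((m+1)+n+1).factorial) :=
          Nat.mul_le_mul_right _ h
      _ = (2*(m+1)) * ((((m+1)+1) * (m+1).factorial) * (((((m+1)+n+1)+1)) * ((m+1)+n+1).factorial)) := by
          ring
  have hc : ((2*((m+1)+1) : ℕ) : ℝ) * (((m+1).factorial * ((m+1)+n+1).factorial : ℕ) : ℝ)
      ≤ ((2*(m+1) : ℕ) : ℝ) * ((((m+1)+1).factorial * (((m+1)+n+1)+1).factorial : ℕ) : ℝ) := by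
    rw [← Nat.cast_mul, ← Nat.cast_mul]; exact_mod_cast hkey
  have := key_div_le (t/2) ((2*(m+1) : ℕ) : ℝ) ((2*((m+1)+1) : ℕ) : ℝ)
    (((m+1).factorial * ((m+1)+n+1).factorial : ℕ) : ℝ)
    ((((m+1)+1).factorial * (((m+1)+n+1)+1).factorial : ℕ) : ℝ) hu0 hu1 (2*(m+1)+n+1)
    (by positivity) (by positivity) (by positivity) hc
  push_cast at this
  convert this using 2 <;> push_cast <;> ring

end BesselAux

namespace BesselAux

lemma upper_series (n : ℕ) (hn : 1 ≤ n) (t : ℝ) (ht0 : 0 < t) (ht2 : t < 2) :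
    (2*(n:ℝ)+1) * besselJ (n+1) t ≤ t * besselJ n t := by
  have hu0 : (0:ℝ) ≤ t/2 := by linarith
  have hu1 : t/2 ≤ 1 := by linarith
  have hs1 : Summable (fun m => t * bterm n t m - (2*(n:ℝ)+1) * bterm (n+1) t m) :=
    ((summable_bterm n t).mul_left t).sub ((summable_bterm (n+1) t).mul_left _)
  have hcongr : (fun m => t * bterm n t m - (2*(n:ℝ)+1) * bterm (n+1) t m)
      = fun m => (-1:ℝ)^m * gU n t m := funext fun m => point_upper n t m
  have heq : t * besselJ n t - (2*(n:ℝ)+1) * besselJ (n+1) t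
      = ∑' m, ((-1:ℝ)^m * gU n t m) := by
    rw [besselJ_eq, besselJ_eq, ← tsum_mul_left, ← tsum_mul_left,
      ← Summable.tsum_sub ((summable_bterm n t).mul_left t) ((summable_bterm (n+1) t).mul_left _),
      hcongr]
  have hnn : 0 ≤ ∑' m, ((-1:ℝ)^m * gU n t m) := by
    apply tsum_pair_nonneg _ (hcongr ▸ hs1)
    intro k
    have he : (-1:ℝ) ^ (2*k) = 1 := by rw [pow_mul]; norm_num
    have ho : (-1:ℝ) ^ (2*k+1) = -1 := by rw [pow_succ, pow_mul]; norm_num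
    rw [he, ho, one_mul, neg_one_mul]
    have := gU_dec n hn t hu0 hu1 (2*k)
    linarith
  linarith [heq ▸ hnn]

lemma lower_series (n : ℕ) (t : ℝ) (ht0 : 0 < t) (ht2 : t < 2) :
    t * besselJ n t ≤ 2*((n:ℝ)+1) * besselJ (n+1) t := by
  have hu0 : (0:ℝ) ≤ t/2 := by linarith
  have hu1 : t/2 ≤ 1 := by linarith
  have hs1 : Summable (fun m => 2*((n:ℝ)+1) * bterm (n+1) t m - t * bterm n t m) :=
    ((summable_bterm (n+1) t).mul_left _).sub ((summable_bterm n t).mul_left t)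
  have hcongr : (fun m => 2*((n:ℝ)+1) * bterm (n+1) t m - t * bterm n t m)
      = fun m => (-1:ℝ)^(m+1) * gL n t m := funext fun m => point_lower n t m
  have hs2 : Summable (fun m => (-1:ℝ)^(m+1) * gL n t m) := hcongr ▸ hs1
  have heq : 2*((n:ℝ)+1) * besselJ (n+1) t - t * besselJ n t
      = ∑' m, ((-1:ℝ)^(m+1) * gL n t m) := by
    rw [besselJ_eq, besselJ_eq, ← tsum_mul_left, ← tsum_mul_left,
      ← Summable.tsum_sub ((summable_bterm (n+1) t).mul_left _) ((summable_bterm n t).mul_left t),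
      hcongr]
  have h00 : (-1:ℝ)^(0+1) * gL n t 0 = 0 := by simp [gL]
  have hshift : ∑' m, ((-1:ℝ)^(m+1) * gL n t m)
      = ∑' j, ((-1:ℝ)^j * gL n t (j+1)) := by
    rw [Summable.tsum_eq_zero_add hs2, h00, zero_add]
    apply tsum_congr
    intro j
    have : (-1:ℝ)^(j+1+1) = (-1:ℝ)^j := by rw [pow_succ, pow_succ]; ring
    rw [this]
  have hs3 : Summable (fun j => (-1:ℝ)^j * gL n t (j+1)) := by
    have h4 : Summable (fun j => (-1:ℝ)^(j+1+1) * gL n t (j+1)) :=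
      hs2.comp_injective (fun a b h => by simpa using h : Function.Injective (· + 1))
    apply h4.congr
    intro j
    have : (-1:ℝ)^(j+1+1) = (-1:ℝ)^j := by rw [pow_succ, pow_succ]; ring
    rw [this]
  have hnn : 0 ≤ ∑' j, ((-1:ℝ)^j * gL n t (j+1)) := by
    apply tsum_pair_nonneg _ hs3
    intro k
    have he : (-1:ℝ) ^ (2*k) = 1 := by rw [pow_mul]; norm_num
    have ho : (-1:ℝ) ^ (2*k+1) = -1 := by rw [pow_succ, pow_mul]; norm_num
    rw [he, ho, one_mul, neg_one_mul]
    have hd := gL_dec n t hu0 hu1 (2*k)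
    have e : 2*k+1+1 = 2*k+2 := rfl
    rw [e]
    linarith
  have := heq ▸ (hshift ▸ hnn)
  linarith [heq, hshift, hnn]

end BesselAux

/-- For `n ≥ 1` and `0 < t < π/2`,
`t/(2(n+1)) ≤ J_{n+1}(t)/J_n(t) ≤ t/(2n+1)`. -/
theorem besselJ_ratio_bounds (n : ℕ) (hn : 1 ≤ n) (t : ℝ)
    (ht0 : 0 < t) (ht : t < Real.pi / 2) :
    t / (2 * (n + 1)) ≤ besselJ (n + 1) t / besselJ n t ∧
      besselJ (n + 1) t / besselJ n t ≤ t / (2 * n + 1) := by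
  have ht2 : t < 2 := lt_of_lt_of_le ht (by nlinarith [Real.pi_le_four])
  have hJn : 0 < besselJ n t := BesselAux.besselJ_pos n t ht0 ht2
  have hJn1 : 0 < besselJ (n+1) t := BesselAux.besselJ_pos (n+1) t ht0 ht2
  have hU := BesselAux.upper_series n hn t ht0 ht2
  have hL := BesselAux.lower_series n t ht0 ht2
  constructor
  · rw [div_le_div_iff₀ (by positivity) hJn]
    push_cast
    nlinarith [hL]
  · rw [div_le_div_iff₀ hJn (by positivity)]
    push_cast
    nlinarith [hU]
end

section
/- For integers n > m ≥ 0 and real t with 0 < t ≤ π/2, one has J_n(t)/J_m(t) ≤ (t/2)^{n−m} Γ(m+1/2)/Γ(n+1/2). -/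
namespace BesselAux

/-- `u x k j = x^j / (j! (j+k)!)`. -/
noncomputable def u (x : ℝ) (k j : ℕ) : ℝ := x ^ j / (j.factorial * (j + k).factorial)

/-- The normalized Bessel series. -/
noncomputable def S (x : ℝ) (k : ℕ) : ℝ :=
  ∑' j : ℕ, ((-1 : ℝ) ^ j * x ^ j) / (j.factorial * (j + k).factorial)

lemma u_nonneg {x : ℝ} (hx : 0 ≤ x) (k j : ℕ) : 0 ≤ u x k j := by
  unfold u; positivity

lemma u_pos {x : ℝ} (hx : 0 < x) (k j : ℕ) : 0 < u x k j := by
  unfold u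
  have h1 : (0:ℝ) < j.factorial := by exact_mod_cast j.factorial_pos
  have h2 : (0:ℝ) < (j+k).factorial := by exact_mod_cast (j+k).factorial_pos
  positivity

lemma summable_u {x : ℝ} (hx : 0 ≤ x) (k : ℕ) : Summable (u x k) := by
  refine Summable.of_nonneg_of_le (u_nonneg hx k) (fun j => ?_)
    (Real.summable_pow_div_factorial x)
  unfold u
  apply div_le_div_of_nonneg_left (by positivity) (by positivity)
  have h1 : (1 : ℝ) ≤ ((j + k).factorial : ℝ) := by exact_mod_cast (j + k).factorial_pos
  have h2 : (0:ℝ) < j.factorial := by exact_mod_cast j.factorial_pos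
  nlinarith

lemma summable_u_even {x : ℝ} (hx : 0 ≤ x) (k : ℕ) :
    Summable (fun i => u x k (2 * i)) :=
  (summable_u hx k).comp_injective (fun a b h => by omega)

lemma summable_u_odd {x : ℝ} (hx : 0 ≤ x) (k : ℕ) :
    Summable (fun i => u x k (2 * i + 1)) :=
  (summable_u hx k).comp_injective (fun a b h => by omega)

lemma summable_pair {x : ℝ} (hx : 0 ≤ x) (k : ℕ) :
    Summable (fun i => u x k (2 * i) - u x k (2 * i + 1)) :=
  (summable_u_even hx k).sub (summable_u_odd hx k)

lemma S_eq_pairs {x : ℝ} (hx : 0 ≤ x) (k : ℕ) :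
    S x k = ∑' i : ℕ, (u x k (2 * i) - u x k (2 * i + 1)) := by
  set f : ℕ → ℝ := fun j => ((-1 : ℝ) ^ j * x ^ j) / (j.factorial * (j + k).factorial) with hf
  have he : (fun i : ℕ => f (2 * i)) = fun i => u x k (2 * i) := by
    funext i; simp [hf, u, pow_mul]
  have ho : (fun i : ℕ => f (2 * i + 1)) = fun i => -u x k (2 * i + 1) := by
    funext i; simp [hf, u, pow_succ, pow_mul, neg_div]
  have hse : Summable (fun i : ℕ => f (2 * i)) := by rw [he]; exact summable_u_even hx k
  have hso : Summable (fun i : ℕ => f (2 * i + 1)) := by rw [ho]; exact (summable_u_odd hx k).neg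
  calc S x k = (∑' i, f (2 * i)) + ∑' i, f (2 * i + 1) := (tsum_even_add_odd hse hso).symm
    _ = (∑' i, u x k (2 * i)) - ∑' i, u x k (2 * i + 1) := by
        rw [he, ho, tsum_neg]; ring
    _ = ∑' i, (u x k (2 * i) - u x k (2 * i + 1)) :=
        (Summable.tsum_sub (summable_u_even hx k) (summable_u_odd hx k)).symm

lemma u_succ (x : ℝ) (k j : ℕ) :
    u x k (j + 1) = u x k j * (x / (((j:ℝ) + 1) * ((j:ℝ) + (k:ℝ) + 1))) := by
  unfold u
  rw [Nat.factorial_succ]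
  have h : (j + 1 + k) = (j + k) + 1 := by omega
  rw [h, Nat.factorial_succ]
  have hc : (j.factorial : ℝ) ≠ 0 := by positivity
  have hd : ((j + k).factorial : ℝ) ≠ 0 := by positivity
  push_cast
  field_simp
  ring

lemma u_k_succ (x : ℝ) (k j : ℕ) :
    u x (k + 1) j = u x k j * (1 / ((j:ℝ) + (k:ℝ) + 1)) := by
  unfold u
  have h : (j + (k + 1)) = (j + k) + 1 := by omega
  rw [h, Nat.factorial_succ]
  have hc : (j.factorial : ℝ) ≠ 0 := by positivity
  have hd : ((j + k).factorial : ℝ) ≠ 0 := by positivity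
  push_cast
  field_simp
  try ring
  try tauto

lemma frac_le_one {x : ℝ} (hx0 : 0 ≤ x) (hx : x ≤ 1) (k j : ℕ) :
    x / (((j:ℝ) + 1) * ((j:ℝ) + (k:ℝ) + 1)) ≤ 1 := by
  have hJ : (0:ℝ) ≤ (j:ℝ) := by positivity
  have hK : (0:ℝ) ≤ (k:ℝ) := by positivity
  rw [div_le_one (by positivity)]
  nlinarith

lemma pair_nonneg {x : ℝ} (hx0 : 0 ≤ x) (hx : x ≤ 1) (k j : ℕ) :
    0 ≤ u x k j - u x k (j + 1) := by
  rw [u_succ]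
  have hu := u_nonneg hx0 k j
  nlinarith [mul_le_of_le_one_right hu (frac_le_one hx0 hx k j)]

lemma pair_pos {x : ℝ} (hx0 : 0 < x) (hx : x < 1) (k j : ℕ) :
    0 < u x k j - u x k (j + 1) := by
  rw [u_succ]
  have hu := u_pos hx0 k j
  have hJ : (0:ℝ) ≤ (j:ℝ) := by positivity
  have hK : (0:ℝ) ≤ (k:ℝ) := by positivity
  have hfrac : x / (((j:ℝ) + 1) * ((j:ℝ) + (k:ℝ) + 1)) < 1 := by
    rw [div_lt_one (by positivity)]
    nlinarith [mul_nonneg hJ hK, mul_nonneg hJ hJ]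
  nlinarith [mul_lt_of_lt_one_right hu hfrac]

lemma pair_mono {x : ℝ} (hx0 : 0 ≤ x) (hx : x ≤ 2/3) (k j : ℕ) :
    ((k : ℝ) + 1/2) * (u x (k+1) j - u x (k+1) (j+1)) ≤
      u x k j - u x k (j+1) := by
  have hJ : (0:ℝ) ≤ (j:ℝ) := by positivity
  have hK : (0:ℝ) ≤ (k:ℝ) := by positivity
  set J := (j:ℝ)
  set K := (k:ℝ)
  have hJK1 : (0:ℝ) < J + K + 1 := by linarith
  have hJK2 : (0:ℝ) < J + K + 2 := by linarith
  have hJ1 : (0:ℝ) < J + 1 := by linarith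
  have hu := u_nonneg hx0 k j
  have e2 : u x k (j+1) = u x k j * (x / ((J + 1) * (J + K + 1))) := u_succ x k j
  have e3 : u x (k+1) j = u x k j * (1 / (J + K + 1)) := u_k_succ x k j
  have e4 : u x (k+1) (j+1) = u x k j * (1 / (J + K + 1)) * (x / ((J + 1) * (J + K + 2))) := by
    rw [u_succ x (k+1) j, e3]
    have hcast : ((k+1 : ℕ) : ℝ) = K + 1 := by push_cast; ring
    rw [hcast]
    ring_nf
    simp only [J, K]
    ring
  have hred : (K + 1/2) * ((J + 1) * (J + K + 2) - x) ≤ ((J + 1) * (J + K + 1) - x) * (J + K + 2) := by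
    nlinarith [mul_nonneg (mul_nonneg hJ hJ) hJ, mul_nonneg hJ hJ,
      mul_nonneg (mul_nonneg hJ hJ) hK, mul_nonneg hJ hK,
      mul_le_mul_of_nonneg_right hx (show (0:ℝ) ≤ J + 3/2 by linarith)]
  have core : (K + 1/2) * (1 / (J + K + 1)) * (1 - x / ((J + 1) * (J + K + 2))) ≤
      1 - x / ((J + 1) * (J + K + 1)) := by
    have lhs_eq : (K + 1/2) * (1 / (J + K + 1)) * (1 - x / ((J + 1) * (J + K + 2))) =
        ((K + 1/2) * ((J + 1) * (J + K + 2) - x)) / ((J + K + 1) * ((J + 1) * (J + K + 2))) := by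
      field_simp
      try ring
      try tauto
    have rhs_eq : 1 - x / ((J + 1) * (J + K + 1)) =
        ((J + 1) * (J + K + 1) - x) / ((J + 1) * (J + K + 1)) := by
      field_simp
    rw [lhs_eq, rhs_eq, div_le_div_iff₀ (by positivity) (by positivity)]
    nlinarith [mul_le_mul_of_nonneg_right hred (le_of_lt (mul_pos hJ1 hJK1))]
  calc ((k : ℝ) + 1/2) * (u x (k+1) j - u x (k+1) (j+1))
      = u x k j * ((K + 1/2) * (1 / (J + K + 1)) * (1 - x / ((J + 1) * (J + K + 2)))) := by
        rw [e3, e4]; ring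
    _ ≤ u x k j * (1 - x / ((J + 1) * (J + K + 1))) :=
        mul_le_mul_of_nonneg_left core hu
    _ = u x k j - u x k (j+1) := by rw [e2]; ring

lemma S_succ_le {x : ℝ} (hx0 : 0 ≤ x) (hx : x ≤ 2/3) (k : ℕ) :
    ((k : ℝ) + 1/2) * S x (k+1) ≤ S x k := by
  rw [S_eq_pairs hx0 k, S_eq_pairs hx0 (k+1), ← tsum_mul_left]
  exact Summable.tsum_le_tsum (fun i => pair_mono hx0 hx k (2*i))
    ((summable_pair hx0 (k+1)).mul_left _) (summable_pair hx0 k)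

lemma S_pos {x : ℝ} (hx0 : 0 < x) (hx : x ≤ 2/3) (k : ℕ) : 0 < S x k := by
  rw [S_eq_pairs hx0.le k]
  exact lt_of_lt_of_le (pair_pos hx0 (lt_of_le_of_lt hx (by norm_num)) k (2*0))
    (Summable.le_tsum (summable_pair hx0.le k) 0
      (fun i _ => pair_nonneg hx0.le (le_trans hx (by norm_num)) k (2*i)))

lemma gamma_S_anti {x : ℝ} (hx0 : 0 < x) (hx : x ≤ 2/3) :
    Antitone (fun k : ℕ => Real.Gamma ((k:ℝ) + 1/2) * S x k) := by
  apply antitone_nat_of_succ_le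
  intro k
  have hg : 0 < Real.Gamma ((k:ℝ) + 1/2) := Real.Gamma_pos_of_pos (by positivity)
  have hGsucc : Real.Gamma (((k+1:ℕ):ℝ) + 1/2) = ((k:ℝ) + 1/2) * Real.Gamma ((k:ℝ) + 1/2) := by
    have h : (((k+1:ℕ):ℝ) + 1/2) = ((k:ℝ) + 1/2) + 1 := by push_cast; ring
    rw [h, Real.Gamma_add_one (by positivity)]
  show Real.Gamma (((k+1:ℕ):ℝ) + 1/2) * S x (k+1) ≤ Real.Gamma ((k:ℝ) + 1/2) * S x k
  rw [hGsucc]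
  calc ((k:ℝ) + 1/2) * Real.Gamma ((k:ℝ) + 1/2) * S x (k+1)
      = Real.Gamma ((k:ℝ) + 1/2) * (((k:ℝ) + 1/2) * S x (k+1)) := by ring
    _ ≤ Real.Gamma ((k:ℝ) + 1/2) * S x k :=
        mul_le_mul_of_nonneg_left (S_succ_le hx0.le hx k) hg.le

lemma besselJ_eq_s4 (k : ℕ) (t : ℝ) : besselJ k t = (t/2)^k * S ((t/2)^2) k := by
  rw [besselJ, S, ← tsum_mul_left]
  congr 1
  funext j
  rw [pow_add, pow_mul]
  ring

end BesselAux

/-- For integers `n > m ≥ 0` and `0 < t ≤ π/2`,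
`J_n(t)/J_m(t) ≤ (t/2)^{n−m} Γ(m+1/2)/Γ(n+1/2)`. -/
theorem besselJ_ratio_gamma_bound (n m : ℕ) (hmn : m < n) (t : ℝ)
    (ht0 : 0 < t) (ht : t ≤ Real.pi / 2) :
    besselJ n t / besselJ m t ≤
      (t / 2) ^ (n - m) * (Real.Gamma (m + 1 / 2) / Real.Gamma (n + 1 / 2)) := by
  set x := (t/2)^2 with hxdef
  have hx0 : (0:ℝ) < x := by positivity
  have hx23 : x ≤ 2/3 := by
    have hpi : Real.pi < 3.15 := Real.pi_lt_d2
    have h1 : t/2 ≤ Real.pi/4 := by linarith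
    have h2 : 0 < t/2 := by linarith
    have h3 : x ≤ (Real.pi/4)^2 := by
      rw [hxdef]
      nlinarith
    nlinarith [Real.pi_pos]
  have hSm := BesselAux.S_pos hx0 hx23 m
  have hSn := BesselAux.S_pos hx0 hx23 n
  have hgn : 0 < Real.Gamma ((n:ℝ) + 1/2) := Real.Gamma_pos_of_pos (by positivity)
  have hanti : Real.Gamma ((n:ℝ) + 1/2) * BesselAux.S x n ≤
      Real.Gamma ((m:ℝ) + 1/2) * BesselAux.S x m :=
    BesselAux.gamma_S_anti hx0 hx23 hmn.le
  rw [BesselAux.besselJ_eq_s4, BesselAux.besselJ_eq_s4]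
  have hpow : (t/2)^n = (t/2)^(n-m) * (t/2)^m := by
    rw [← pow_add, Nat.sub_add_cancel hmn.le]
  rw [hpow]
  have htp : (0:ℝ) < t/2 := by linarith
  have heq : ((t/2)^(n-m) * (t/2)^m * BesselAux.S x n) / ((t/2)^m * BesselAux.S x m) =
      (t/2)^(n-m) * (BesselAux.S x n / BesselAux.S x m) := by
    field_simp
  rw [heq]
  apply mul_le_mul_of_nonneg_left _ (by positivity)
  rw [div_le_div_iff₀ hSm hgn]
  nlinarith [hanti]
end

section
/- For every integer n ≥ 1, (n/e)^n e^{1/(12n+1)} √(2πn) < n! < (n/e)^n e^{1/(12n)} √(2πn). -/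
open Real Filter Nat Stirling
open scoped Topology

namespace StirlingTwoSidedAux

/-- `3^k * (2k+3) ≤ 3 * 5^k`, the key combinatorial inequality for Robbins' lower bound. -/
lemma aux_pow (k : ℕ) : (3 : ℝ) ^ k * (2 * k + 3) ≤ 3 * 5 ^ k := by
  induction k with
  | zero => norm_num
  | succ k ih =>
    have h3 : (0 : ℝ) < 3 ^ k := by positivity
    have h5 : (0 : ℝ) < 5 ^ k := by positivity
    push_cast [pow_succ] at ih ⊢
    nlinarith [h3, h5, ih]

/-- Upper bound on the telescoping difference of `log ∘ stirlingSeq`. -/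
lemma diff_lt (m : ℕ) :
    log (stirlingSeq (m + 1)) - log (stirlingSeq (m + 2)) <
      1 / (12 * ((m:ℝ) + 1)) - 1 / (12 * ((m:ℝ) + 2)) := by
  have hxpos : (0:ℝ) < (1 / (2 * ((m:ℝ) + 1) + 1)) ^ 2 := by positivity
  have hxlt : (1 / (2 * ((m:ℝ) + 1) + 1)) ^ 2 < 1 := by
    rw [div_pow, one_pow, div_lt_one (by positivity)]
    nlinarith [Nat.cast_nonneg (α := ℝ) m]
  set x : ℝ := (1 / (2 * ((m:ℝ) + 1) + 1)) ^ 2 with hx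
  have hf : HasSum (fun k : ℕ => (1 : ℝ) / (2 * ((k : ℝ) + 1) + 1) * x ^ (k + 1))
      (log (stirlingSeq (m + 1)) - log (stirlingSeq (m + 2))) := by
    refine (log_stirlingSeq_diff_hasSum m).congr_fun fun k => ?_
    push_cast
    rw [hx]
  have hg : HasSum (fun k : ℕ => (1 / 3 : ℝ) * x ^ (k + 1)) ((1 / 3) * (x / (1 - x))) := by
    have := (hasSum_geometric_of_lt_one hxpos.le hxlt).mul_left x
    simp_rw [← _root_.pow_succ'] at this
    exact (this.mul_left (1 / 3)).congr_fun fun k => by ring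
  have hlt : log (stirlingSeq (m + 1)) - log (stirlingSeq (m + 2)) < (1 / 3) * (x / (1 - x)) := by
    rw [← hf.tsum_eq, ← hg.tsum_eq]
    refine Summable.tsum_lt_tsum_of_nonneg (i := 1) (fun b => by positivity) (fun b => ?_) ?_ hg.summable
    · have hb : (1:ℝ) / (2 * ((b : ℝ) + 1) + 1) ≤ 1 / 3 := by
        rw [div_le_div_iff₀ (by positivity) (by norm_num)]
        nlinarith [Nat.cast_nonneg (α := ℝ) b]
      exact mul_le_mul_of_nonneg_right hb (by positivity)
    · have hx2 : (0 : ℝ) < x ^ 2 := by positivity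
      norm_num
      nlinarith [hx2]
  refine hlt.trans_le (le_of_eq ?_)
  rw [hx]
  have h2 : (0:ℝ) < 2 * ((m:ℝ) + 1) + 1 := by positivity
  have h3 : (0:ℝ) < (2 * ((m:ℝ) + 1) + 1)^2 - 1 := by nlinarith [Nat.cast_nonneg (α := ℝ) m]
  field_simp
  ring

/-- Lower bound on the telescoping difference of `log ∘ stirlingSeq`. -/
lemma lt_diff (m : ℕ) :
    1 / (12 * ((m:ℝ) + 1) + 1) - 1 / (12 * ((m:ℝ) + 2) + 1) <
      log (stirlingSeq (m + 1)) - log (stirlingSeq (m + 2)) := by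
  have hm : (0:ℝ) ≤ (m:ℝ) := Nat.cast_nonneg m
  have h2 : (0:ℝ) < 2 * ((m:ℝ) + 1) + 1 := by positivity
  have hxpos : (0:ℝ) < (1 / (2 * ((m:ℝ) + 1) + 1)) ^ 2 := by positivity
  have hx9 : (1 / (2 * ((m:ℝ) + 1) + 1)) ^ 2 ≤ 1/9 := by
    rw [div_pow, one_pow, div_le_div_iff₀ (by positivity) (by norm_num)]
    nlinarith
  set x : ℝ := (1 / (2 * ((m:ℝ) + 1) + 1)) ^ 2 with hx
  have hratio : (0:ℝ) ≤ 3 * x / 5 := by positivity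
  have hratio1 : 3 * x / 5 < 1 := by nlinarith
  have hf : HasSum (fun k : ℕ => (1 : ℝ) / (2 * ((k : ℝ) + 1) + 1) * x ^ (k + 1))
      (log (stirlingSeq (m + 1)) - log (stirlingSeq (m + 2))) := by
    refine (log_stirlingSeq_diff_hasSum m).congr_fun fun k => ?_
    push_cast
    rw [hx]
  have hg : HasSum (fun k : ℕ => (x / 3) * (3 * x / 5) ^ k) ((x / 3) * (1 - 3 * x / 5)⁻¹) :=
    (hasSum_geometric_of_lt_one hratio hratio1).mul_left (x / 3)
  have hle : ∀ b : ℕ, (x / 3) * (3 * x / 5) ^ b ≤ (1 : ℝ) / (2 * ((b : ℝ) + 1) + 1) * x ^ (b + 1) := by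
    intro b
    have h5b : (0:ℝ) < 5 ^ b := by positivity
    have h3b : (0:ℝ) < 3 ^ b := by positivity
    have h1 : (x / 3) * (3 * x / 5) ^ b = (3 ^ b / (3 * 5 ^ b)) * x ^ (b + 1) := by
      rw [div_pow, mul_pow]
      field_simp
      ring
    rw [h1]
    have hxp : (0 : ℝ) ≤ x ^ (b + 1) := by positivity
    refine mul_le_mul_of_nonneg_right ?_ hxp
    rw [div_le_div_iff₀ (by positivity) (by positivity)]
    nlinarith [aux_pow b, Nat.cast_nonneg (α := ℝ) b]
  have hstrict : (x / 3) * (3 * x / 5) ^ 2 < (1 : ℝ) / (2 * (((2:ℕ) : ℝ) + 1) + 1) * x ^ (2 + 1) := by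
    have hx3 : (0 : ℝ) < x ^ 3 := by positivity
    norm_num
    nlinarith [hx3]
  have hlt : (x / 3) * (1 - 3 * x / 5)⁻¹ < log (stirlingSeq (m + 1)) - log (stirlingSeq (m + 2)) := by
    rw [← hf.tsum_eq, ← hg.tsum_eq]
    exact Summable.tsum_lt_tsum_of_nonneg (i := 2) (fun b => by positivity) hle hstrict hf.summable
  refine lt_of_le_of_lt ?_ hlt
  rw [hx]
  have hden : (0:ℝ) < 1 - 3 * (1 / (2 * ((m:ℝ) + 1) + 1)) ^ 2 / 5 := by
    nlinarith [hx9, hxpos]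
  rw [← div_eq_mul_inv]
  rw [div_sub_div _ _ (by positivity) (by positivity), div_le_div_iff₀ (by positivity) hden]
  have h9 : (0:ℝ) < (2 * ((m:ℝ) + 1) + 1)^2 := by positivity
  field_simp
  nlinarith [hm, sq_nonneg ((m:ℝ))]

lemma tendsto_aux (c : ℝ) (hc : 0 ≤ c) :
    Tendsto (fun k : ℕ => 1 / (12 * ((k:ℝ) + 1) + c)) atTop (𝓝 0) := by
  have hb : Tendsto (fun k : ℕ => 12 * ((k:ℝ) + 1) + c) atTop atTop := by
    apply tendsto_atTop_mono (f := fun k : ℕ => (k : ℝ))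
    · intro k
      have := Nat.cast_nonneg (α := ℝ) k
      linarith
    · exact tendsto_natCast_atTop_atTop
  simpa only [one_div, Function.comp_def] using tendsto_inv_atTop_zero.comp hb

lemma log_bounds (m : ℕ) :
    Real.log (Real.sqrt π) + 1 / (12 * ((m:ℝ) + 1) + 1) < Real.log (stirlingSeq (m + 1)) ∧
    Real.log (stirlingSeq (m + 1)) < Real.log (Real.sqrt π) + 1 / (12 * ((m:ℝ) + 1)) := by
  have hπ : (0:ℝ) < Real.sqrt π := Real.sqrt_pos.mpr Real.pi_pos
  have hlogtend : Tendsto (fun k : ℕ => log (stirlingSeq (k + 1))) atTop (𝓝 (log (Real.sqrt π))) :=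
    (tendsto_stirlingSeq_sqrt_pi.comp (tendsto_add_atTop_nat 1)).log hπ.ne'
  -- upper bound via strictly increasing sequence A
  have hA : StrictMono (fun k : ℕ => log (stirlingSeq (k + 1)) - 1 / (12 * ((k:ℝ) + 1))) := by
    apply strictMono_nat_of_lt_succ
    intro k
    have := diff_lt k
    push_cast at this ⊢
    ring_nf at this ⊢
    linarith
  have hAt : Tendsto (fun k : ℕ => log (stirlingSeq (k + 1)) - 1 / (12 * ((k:ℝ) + 1)))
      atTop (𝓝 (log (Real.sqrt π))) := by
    have h0 : Tendsto (fun k : ℕ => 1 / (12 * ((k:ℝ) + 1))) atTop (𝓝 0) := by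
      simpa using tendsto_aux 0 le_rfl
    simpa using hlogtend.sub h0
  have hBs : StrictAnti (fun k : ℕ => log (stirlingSeq (k + 1)) - 1 / (12 * ((k:ℝ) + 1) + 1)) := by
    apply strictAnti_nat_of_succ_lt
    intro k
    have := lt_diff k
    push_cast at this ⊢
    ring_nf at this ⊢
    linarith
  have hBt : Tendsto (fun k : ℕ => log (stirlingSeq (k + 1)) - 1 / (12 * ((k:ℝ) + 1) + 1))
      atTop (𝓝 (log (Real.sqrt π))) := by
    simpa using hlogtend.sub (tendsto_aux 1 zero_le_one)
  constructor
  · have h1 : log (Real.sqrt π) ≤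
        log (stirlingSeq (m + 1 + 1)) - 1 / (12 * ((m:ℝ) + 1 + 1) + 1) := by
      have := hBs.antitone.le_of_tendsto hBt (m + 1)
      push_cast at this ⊢
      linarith
    have h2 := hBs (Nat.lt_succ_self m)
    push_cast at h2
    linarith
  · have h1 : log (stirlingSeq (m + 1 + 1)) - 1 / (12 * ((m:ℝ) + 1 + 1)) ≤
        log (Real.sqrt π) := by
      have := hA.monotone.ge_of_tendsto hAt (m + 1)
      push_cast at this ⊢
      linarith
    have h2 := hA (Nat.lt_succ_self m)
    push_cast at h2
    linarith

end StirlingTwoSidedAux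

/-- Stirling's two-sided inequality:
`(n/e)^n e^{1/(12n+1)} √(2πn) < n! < (n/e)^n e^{1/(12n)} √(2πn)` for `n ≥ 1`. -/
theorem stirling_two_sided (n : ℕ) (hn : 1 ≤ n) :
    ((n : ℝ) / Real.exp 1) ^ n * Real.exp (1 / (12 * n + 1)) *
        Real.sqrt (2 * Real.pi * n) < (n.factorial : ℝ) ∧
      (n.factorial : ℝ) <
        ((n : ℝ) / Real.exp 1) ^ n * Real.exp (1 / (12 * n)) *
          Real.sqrt (2 * Real.pi * n) := by
  obtain ⟨m, rfl⟩ : ∃ m, n = m + 1 := ⟨n - 1, by omega⟩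
  obtain ⟨hlow, hup⟩ := StirlingTwoSidedAux.log_bounds m
  have hπ : (0:ℝ) < Real.sqrt π := Real.sqrt_pos.mpr Real.pi_pos
  have hspos : 0 < stirlingSeq (m + 1) := stirlingSeq'_pos m
  have hn' : (0:ℝ) < ((m + 1 : ℕ) : ℝ) := by positivity
  have hD : (0:ℝ) < Real.sqrt (2 * ((m + 1 : ℕ) : ℝ)) * (((m + 1 : ℕ) : ℝ) / Real.exp 1) ^ (m + 1) := by
    positivity
  have hfact : ((m + 1).factorial : ℝ) =
      stirlingSeq (m + 1) * (Real.sqrt (2 * ((m + 1 : ℕ) : ℝ)) *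
        (((m + 1 : ℕ) : ℝ) / Real.exp 1) ^ (m + 1)) := by
    rw [stirlingSeq, div_mul_cancel₀ _ hD.ne']
  have hsqrt : Real.sqrt (2 * Real.pi * ((m + 1 : ℕ) : ℝ)) =
      Real.sqrt π * Real.sqrt (2 * ((m + 1 : ℕ) : ℝ)) := by
    rw [show 2 * Real.pi * ((m + 1 : ℕ) : ℝ) = π * (2 * ((m + 1 : ℕ) : ℝ)) by ring,
      Real.sqrt_mul Real.pi_pos.le]
  have hcast : ((m + 1 : ℕ) : ℝ) = (m:ℝ) + 1 := by push_cast; ring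
  constructor
  · -- lower bound
    have hexp : Real.sqrt π * Real.exp (1 / (12 * ((m:ℝ) + 1) + 1)) < stirlingSeq (m + 1) := by
      have := Real.exp_lt_exp.mpr hlow
      rwa [Real.exp_add, Real.exp_log hπ, Real.exp_log hspos] at this
    calc (((m + 1 : ℕ) : ℝ) / Real.exp 1) ^ (m + 1) *
          Real.exp (1 / (12 * ((m + 1 : ℕ) : ℝ) + 1)) *
          Real.sqrt (2 * Real.pi * ((m + 1 : ℕ) : ℝ))
        = (Real.sqrt π * Real.exp (1 / (12 * ((m:ℝ) + 1) + 1))) *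
            (Real.sqrt (2 * ((m + 1 : ℕ) : ℝ)) * (((m + 1 : ℕ) : ℝ) / Real.exp 1) ^ (m + 1)) := by
          rw [hsqrt, hcast]; ring
      _ < stirlingSeq (m + 1) * (Real.sqrt (2 * ((m + 1 : ℕ) : ℝ)) *
            (((m + 1 : ℕ) : ℝ) / Real.exp 1) ^ (m + 1)) := by
          exact mul_lt_mul_of_pos_right hexp hD
      _ = ((m + 1).factorial : ℝ) := hfact.symm
  · -- upper bound
    have hexp : stirlingSeq (m + 1) < Real.sqrt π * Real.exp (1 / (12 * ((m:ℝ) + 1))) := by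
      have := Real.exp_lt_exp.mpr hup
      rwa [Real.exp_add, Real.exp_log hπ, Real.exp_log hspos] at this
    calc ((m + 1).factorial : ℝ)
        = stirlingSeq (m + 1) * (Real.sqrt (2 * ((m + 1 : ℕ) : ℝ)) *
            (((m + 1 : ℕ) : ℝ) / Real.exp 1) ^ (m + 1)) := hfact
      _ < (Real.sqrt π * Real.exp (1 / (12 * ((m:ℝ) + 1)))) *
            (Real.sqrt (2 * ((m + 1 : ℕ) : ℝ)) * (((m + 1 : ℕ) : ℝ) / Real.exp 1) ^ (m + 1)) := by
          exact mul_lt_mul_of_pos_right hexp hD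
      _ = (((m + 1 : ℕ) : ℝ) / Real.exp 1) ^ (m + 1) *
          Real.exp (1 / (12 * ((m + 1 : ℕ) : ℝ))) *
          Real.sqrt (2 * Real.pi * ((m + 1 : ℕ) : ℝ)) := by
          rw [hsqrt, hcast]; ring
end

section
/- For any δ > 0, r > δ, k > 0 and integer n ≥ 0, (∫_0^r J_n(ks)² s ds) / (∫_0^δ J_n(ks)² s ds) ≥ 1, and for fixed k, r, δ this ratio is bounded below by c (r/δ)^{2n} for some constant c > 0 independent of n once n is large enough that kr/(2n+1) ≤ 1/√2. -/
namespace BesselAux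

lemma abs_bterm_eq (n : ℕ) (t : ℝ) (m : ℕ) :
    |bterm n t m| = (|t| / 2) ^ n * (t ^ 2 / 4) ^ m / ((m.factorial : ℝ) * ((m + n).factorial : ℝ)) := by
  rw [bterm, abs_div, abs_mul, abs_pow, abs_neg, abs_one, one_pow, one_mul, abs_pow,
    abs_of_nonneg (by positivity : (0:ℝ) ≤ (m.factorial : ℝ) * ((m + n).factorial : ℝ))]
  congr 1
  rw [pow_add, pow_mul, abs_div, show |(2:ℝ)| = 2 from abs_of_nonneg (by norm_num),
    div_pow, sq_abs]
  norm_num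
  ring

lemma abs_bterm_le (n : ℕ) (t : ℝ) (m : ℕ) :
    |bterm n t m| ≤ (|t| / 2) ^ n * ((t ^ 2 / 4) ^ m / m.factorial) := by
  rw [abs_bterm_eq]
  have hfac : (1:ℝ) ≤ ((m + n).factorial : ℝ) := by
    exact_mod_cast Nat.one_le_iff_ne_zero.mpr (Nat.factorial_ne_zero _)
  have hmf : (0:ℝ) < (m.factorial : ℝ) := by exact_mod_cast Nat.factorial_pos m
  rw [div_le_iff₀ (by positivity)]
  calc (|t| / 2) ^ n * ((t ^ 2 / 4) ^ m / ↑m.factorial) * (↑m.factorial * ↑(m + n).factorial)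
      = (|t| / 2) ^ n * (t ^ 2 / 4) ^ m * ↑(m + n).factorial := by field_simp
    _ ≥ (|t| / 2) ^ n * (t ^ 2 / 4) ^ m * 1 := by gcongr
    _ = (|t| / 2) ^ n * (t ^ 2 / 4) ^ m := by ring
  
lemma summable_abs_bterm (n : ℕ) (t : ℝ) : Summable fun m => |bterm n t m| := by
  have h := Real.summable_pow_div_factorial (t ^ 2 / 4)
  exact Summable.of_nonneg_of_le (fun m => abs_nonneg _) (fun m => abs_bterm_le n t m)
    (h.mul_left _)

lemma fact_pow_le (n m : ℕ) : (n+1).factorial * (n+1)^m ≤ (m + 1 + n).factorial := by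
  induction m with
  | zero => rw [Nat.add_comm 1 n]; simp
  | succ m ih =>
      have : (m + 1 + 1 + n).factorial = (m + 1 + n + 1) * (m + 1 + n).factorial := by
        rw [show m + 1 + 1 + n = (m + 1 + n) + 1 by ring, Nat.factorial_succ]
      rw [this, pow_succ]
      calc (n+1).factorial * ((n+1)^m * (n+1)) = ((n+1).factorial * (n+1)^m) * (n+1) := by ring
        _ ≤ (m + 1 + n).factorial * (n + 1) := by exact Nat.mul_le_mul_right _ ih
        _ ≤ (m + 1 + n).factorial * (m + 1 + n + 1) := by
            apply Nat.mul_le_mul_left; omega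
        _ = (m + 1 + n + 1) * (m + 1 + n).factorial := by ring

lemma bterm_zero (n : ℕ) (t : ℝ) : bterm n t 0 = (t/2)^n / n.factorial := by
  simp [bterm]

set_option maxHeartbeats 1000000 in
/-- Lower bound: for `0 ≤ t` with `t² ≤ n+1`, `besselJ n t ≥ (t/2)^n / (2 n!)`. -/
lemma besselJ_lower (n : ℕ) (t : ℝ) (ht : 0 ≤ t) (h : t ^ 2 ≤ n + 1) :
    (t/2)^n / n.factorial / 2 ≤ besselJ n t := by
  have hsum := summable_bterm n t
  have htail : |∑' m, bterm n t (m+1)| ≤ (t/2)^n / n.factorial / 3 := by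
    have habs : ∀ m, |bterm n t (m+1)| ≤ (t/2)^n * (t^2/4) / (n+1).factorial * (1/4)^m := by
      intro m
      rw [abs_bterm_eq, abs_of_nonneg ht]
      have hf : ((n+1).factorial : ℝ) * (n+1)^m ≤ ((m + 1 + n).factorial : ℝ) := by
        exact_mod_cast fact_pow_le n m
      have hx : (0:ℝ) ≤ t^2/4 := by positivity
      have hxm : (t^2/4)^m ≤ ((n+1)/4 : ℝ)^m := by
        apply pow_le_pow_left₀ hx; linarith
      have h1 : (1:ℝ) ≤ ((m+1).factorial : ℝ) := by
        exact_mod_cast Nat.one_le_iff_ne_zero.mpr (Nat.factorial_ne_zero _)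
      have hnp : (0:ℝ) < ((n+1).factorial : ℝ) := by exact_mod_cast Nat.factorial_pos _
      have hd : ((n+1).factorial : ℝ) * (n+1)^m ≤ ((m+1).factorial : ℝ) * ((m + 1 + n).factorial : ℝ) := by
        calc ((n+1).factorial : ℝ) * (n+1)^m ≤ ((m + 1 + n).factorial : ℝ) := hf
          _ = 1 * ((m + 1 + n).factorial : ℝ) := by ring
          _ ≤ ((m+1).factorial : ℝ) * ((m + 1 + n).factorial : ℝ) := by
              apply mul_le_mul_of_nonneg_right h1; positivity
      calc (t/2)^n * (t^2/4)^(m+1) / (((m+1).factorial : ℝ) * ((m + 1 + n).factorial : ℝ))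
          ≤ (t/2)^n * (t^2/4)^(m+1) / (((n+1).factorial : ℝ) * (n+1)^m) := by
            apply div_le_div_of_nonneg_left _ _ hd
            · positivity
            · positivity
        _ ≤ (t/2)^n * (t^2/4) / (n+1).factorial * (1/4)^m := by
            rw [pow_succ]
            rw [div_le_iff₀ (by positivity)]
            have : (t/2)^n * ((t^2/4)^m * (t^2/4)) = (t/2)^n * (t^2/4) * (t^2/4)^m := by ring
            rw [this]
            calc (t/2)^n * (t^2/4) * (t^2/4)^m
                ≤ (t/2)^n * (t^2/4) * ((n+1)/4 : ℝ)^m := by gcongr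
              _ = (t/2)^n * (t^2/4) / (n+1).factorial * (1/4)^m * (((n+1).factorial : ℝ) * (n+1)^m) := by
                  rw [show ((n:ℝ)+1)/4 = (n+1) * (1/4) by ring, mul_pow]
                  field_simp
    have hs1 : Summable (fun m => bterm n t (m+1)) := (summable_nat_add_iff 1).mpr hsum
    have hs2 : Summable (fun m => |bterm n t (m+1)|) :=
      (summable_nat_add_iff 1).mpr (summable_abs_bterm n t)
    have hs3 : Summable (fun m : ℕ => (t/2)^n * (t^2/4) / (n+1).factorial * (1/4 : ℝ)^m) :=
      (summable_geometric_of_lt_one (by norm_num) (by norm_num)).mul_left _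
    have hnf : (0:ℝ) < (n.factorial : ℝ) := by exact_mod_cast Nat.factorial_pos n
    calc |∑' m, bterm n t (m+1)| ≤ ∑' m, |bterm n t (m+1)| := by
          simpa only [Real.norm_eq_abs] using
            norm_tsum_le_tsum_norm (hs2.congr (fun m => (Real.norm_eq_abs _).symm))
      _ ≤ ∑' m : ℕ, (t/2)^n * (t^2/4) / (n+1).factorial * (1/4 : ℝ)^m :=
          Summable.tsum_le_tsum habs hs2 hs3
      _ = (t/2)^n * (t^2/4) / (n+1).factorial * (1 - 1/4 : ℝ)⁻¹ := by
          rw [tsum_mul_left, tsum_geometric_of_lt_one (by norm_num) (by norm_num)]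
      _ ≤ (t/2)^n / n.factorial / 3 := by
          have hnp1 : ((n+1).factorial : ℝ) = (n+1) * n.factorial := by
            exact_mod_cast Nat.factorial_succ n
          rw [hnp1]
          rw [show ((1:ℝ) - 1/4)⁻¹ = 4/3 by norm_num]
          rw [show (t/2)^n / (n.factorial:ℝ) / 3 = (t/2)^n / (3 * n.factorial) by ring,
            show (t/2)^n * (t^2/4) / (((n:ℝ)+1) * n.factorial) * (4/3)
              = ((t/2)^n * (t^2/4) * (4/3)) / (((n:ℝ)+1) * n.factorial) by ring]
          rw [div_le_div_iff₀ (by positivity) (by positivity)]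
          have hp : (0:ℝ) ≤ (t/2)^n := pow_nonneg (by linarith) n
          have hkey := mul_le_mul_of_nonneg_left h (mul_nonneg hp hnf.le)
          nlinarith [hkey]
  have heq : besselJ n t = bterm n t 0 + ∑' m, bterm n t (m+1) := by
    rw [besselJ_eq]
    exact Summable.tsum_eq_zero_add hsum
  rw [heq, bterm_zero]
  have h2 := abs_le.mp htail
  linarith [h2.1]

lemma abs_bterm_le2 (n : ℕ) (t : ℝ) (m : ℕ) (ht : 0 ≤ t) :
    |bterm n t m| ≤ (t/2)^n / n.factorial * ((t^2/4)^m / m.factorial) := by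
  rw [abs_bterm_eq, abs_of_nonneg ht]
  have hfl : (n.factorial : ℝ) ≤ ((m+n).factorial : ℝ) := by
    exact_mod_cast Nat.factorial_le (Nat.le_add_left n m)
  have hnf : (0:ℝ) < (n.factorial : ℝ) := by exact_mod_cast Nat.factorial_pos n
  have hmf : (0:ℝ) < (m.factorial : ℝ) := by exact_mod_cast Nat.factorial_pos m
  rw [show (t/2)^n / (n.factorial:ℝ) * ((t^2/4)^m / m.factorial)
    = (t/2)^n * (t^2/4)^m / (m.factorial * n.factorial) by ring]
  apply div_le_div_of_nonneg_left (by positivity) (by positivity)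
  exact mul_le_mul_of_nonneg_left hfl hmf.le

/-- Upper bound via exponential-type series. -/
lemma besselJ_abs_le (n : ℕ) (t X : ℝ) (ht : 0 ≤ t) (hX : t^2/4 ≤ X) :
    |besselJ n t| ≤ (t/2)^n / n.factorial * ∑' m : ℕ, X^m / m.factorial := by
  have hX0 : (0:ℝ) ≤ X := le_trans (by positivity) hX
  have hsE : Summable (fun m : ℕ => X^m / m.factorial) := Real.summable_pow_div_factorial X
  have hs2 : Summable (fun m => |bterm n t m|) := summable_abs_bterm n t
  calc |besselJ n t| ≤ ∑' m, |bterm n t m| := by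
        rw [besselJ_eq]
        simpa only [Real.norm_eq_abs] using
          norm_tsum_le_tsum_norm (hs2.congr (fun m => (Real.norm_eq_abs _).symm))
    _ ≤ ∑' m : ℕ, (t/2)^n / n.factorial * (X^m / m.factorial) := by
        apply Summable.tsum_le_tsum _ hs2 (hsE.mul_left _)
        intro m
        refine le_trans (abs_bterm_le2 n t m ht) ?_
        have : (t^2/4)^m ≤ X^m := pow_le_pow_left₀ (by positivity) hX m
        gcongr
    _ = (t/2)^n / n.factorial * ∑' m : ℕ, X^m / m.factorial := tsum_mul_left

lemma one_le_expS (X : ℝ) (hX : 0 ≤ X) : 1 ≤ ∑' m : ℕ, X^m / m.factorial := by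
  have hsE : Summable (fun m : ℕ => X^m / m.factorial) := Real.summable_pow_div_factorial X
  have := Summable.le_tsum hsE 0 (fun j _ => by positivity)
  simpa using this

lemma measurable_besselJ (n : ℕ) (k : ℝ) : Measurable (fun s : ℝ => besselJ n (k * s)) := by
  have : ∀ s : ℝ, Filter.Tendsto (fun N => ∑ m ∈ Finset.range N, bterm n (k*s) m)
      Filter.atTop (nhds (besselJ n (k*s))) := by
    intro s
    rw [besselJ_eq]
    exact (summable_bterm n (k*s)).hasSum.tendsto_sum_nat
  apply measurable_of_tendsto_metrizable (fun N => ?_) (tendsto_pi_nhds.2 this)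
  apply Finset.measurable_sum
  intro m _
  apply Measurable.div_const
  apply Measurable.const_mul
  exact ((measurable_const_mul k).div_const 2).pow_const _

open MeasureTheory intervalIntegral in
/-- the integrand is interval integrable on `[a,b] ⊆ [0,∞)` -/
lemma integrable_bessel_sq (n : ℕ) (k a b : ℝ) (hk : 0 < k) (ha : 0 ≤ a) (hab : a ≤ b) :
    IntervalIntegrable (fun s => (besselJ n (k*s))^2 * s) volume a b := by
  set E : ℝ := ∑' m : ℕ, ((k*b)^2/4)^m / m.factorial with hE
  set M : ℝ := ((k*b/2)^n / n.factorial * E)^2 * b with hM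
  apply IntervalIntegrable.mono_fun (_root_.intervalIntegrable_const (c := M))
  · exact (((measurable_besselJ n k).pow_const 2).mul measurable_id).aestronglyMeasurable
  · rw [Filter.EventuallyLE, ae_restrict_iff' measurableSet_uIoc]
    apply Filter.Eventually.of_forall
    intro s hs
    rw [Set.uIoc_of_le hab] at hs
    have hs0 : 0 < s := lt_of_le_of_lt ha hs.1
    have hsb : s ≤ b := hs.2
    have hb0 : 0 ≤ b := le_trans ha hab
    have hJ : |besselJ n (k*s)| ≤ (k*b/2)^n / n.factorial * E := by
      refine le_trans (besselJ_abs_le n (k*s) ((k*b)^2/4) (by positivity) ?_) ?_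
      · have h3 : k * s ≤ k * b := mul_le_mul_of_nonneg_left hsb hk.le
        have h4 : 0 ≤ k * s := mul_nonneg hk.le hs0.le
        gcongr
      · have hE1 : (1:ℝ) ≤ E := one_le_expS _ (by positivity)
        have hE0 : (0:ℝ) ≤ E := by linarith
        have hks : k * s ≤ k * b := mul_le_mul_of_nonneg_left hsb hk.le
        have hks0 : 0 ≤ k * s := mul_nonneg hk.le hs0.le
        gcongr
    rw [Real.norm_eq_abs, abs_mul, abs_pow, abs_of_nonneg hs0.le, Real.norm_eq_abs]
    have h1 : |besselJ n (k*s)|^2 ≤ ((k*b/2)^n / n.factorial * E)^2 :=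
      pow_le_pow_left₀ (abs_nonneg _) hJ 2
    have h2 : |besselJ n (k*s)|^2 * s ≤ ((k*b/2)^n / n.factorial * E)^2 * b :=
      mul_le_mul h1 hsb hs0.le (by positivity)
    calc |besselJ n (k*s)|^2 * s ≤ M := h2
      _ ≤ |M| := le_abs_self M

end BesselAux

set_option maxHeartbeats 2000000 in
open MeasureTheory intervalIntegral BesselAux in
/-- For `r > δ > 0` and `k > 0`, the ratio of radial Bessel integrals
`(∫_0^r J_n(ks)² s ds)/(∫_0^δ J_n(ks)² s ds)` is at least `1` for every `n ≥ 0`,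
and is bounded below by `c (r/δ)^{2n}` with a constant `c > 0` independent of `n`
once `kr/(2n+1) ≤ 1/√2`. -/
theorem bessel_radial_ratio_lower_bound (δ r k : ℝ)
    (hδ : 0 < δ) (hr : δ < r) (hk : 0 < k) :
    (∀ n : ℕ,
      1 ≤ (∫ s in (0 : ℝ)..r, (besselJ n (k * s)) ^ 2 * s) /
            (∫ s in (0 : ℝ)..δ, (besselJ n (k * s)) ^ 2 * s)) ∧
    ∃ c : ℝ, 0 < c ∧ ∀ n : ℕ, k * r / (2 * n + 1) ≤ 1 / Real.sqrt 2 →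
      c * (r / δ) ^ (2 * n) ≤
        (∫ s in (0 : ℝ)..r, (besselJ n (k * s)) ^ 2 * s) /
          (∫ s in (0 : ℝ)..δ, (besselJ n (k * s)) ^ 2 * s) := by
  have hr0 : 0 < r := lt_trans hδ hr
  have hint : ∀ (n : ℕ) (a b : ℝ), 0 ≤ a → a ≤ b →
      IntervalIntegrable (fun s => (besselJ n (k*s))^2 * s) volume a b :=
    fun n a b ha hab => integrable_bessel_sq n k a b hk ha hab
  have hnonneg : ∀ (n : ℕ) (a b : ℝ), 0 ≤ a → a ≤ b →
      0 ≤ ∫ s in a..b, (besselJ n (k*s))^2 * s := by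
    intro n a b ha hab
    apply intervalIntegral.integral_nonneg hab
    intro u hu
    have : 0 ≤ u := le_trans ha hu.1
    positivity
  -- positivity of the denominator
  set ε : ℝ := min δ (1/k) with hε
  have hε0 : 0 < ε := lt_min hδ (by positivity)
  have hεδ : ε ≤ δ := min_le_left _ _
  have hεk : k * ε ≤ 1 := by
    rw [mul_comm]
    calc ε * k ≤ (1/k) * k := by
          apply mul_le_mul_of_nonneg_right (min_le_right _ _) hk.le
      _ = 1 := by field_simp
  have hden : ∀ n : ℕ, 0 < ∫ s in (0:ℝ)..δ, (besselJ n (k*s))^2 * s := by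
    intro n
    have hb : (0:ℝ) < (k*(ε/2)/2)^n / n.factorial / 2 := by
      have : (0:ℝ) < (n.factorial : ℝ) := by exact_mod_cast Nat.factorial_pos n
      positivity
    set b : ℝ := (k*(ε/2)/2)^n / n.factorial / 2 with hbdef
    have hmid : b^2 * (ε/2) * (ε - ε/2) ≤ ∫ s in (ε/2)..ε, (besselJ n (k*s))^2 * s := by
      have hc : ∫ s in (ε/2)..ε, (b^2 * (ε/2) : ℝ) = b^2 * (ε/2) * (ε - ε/2) := by
        rw [intervalIntegral.integral_const, smul_eq_mul]; ring
      rw [← hc]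
      apply intervalIntegral.integral_mono_on (by linarith)
        (intervalIntegrable_const) (hint n (ε/2) ε (by positivity) (by linarith))
      intro s hs
      have hs1 : ε/2 ≤ s := hs.1
      have hs2 : s ≤ ε := hs.2
      have hs0 : 0 < s := lt_of_lt_of_le (by positivity) hs1
      have hks : (k*s)^2 ≤ (n:ℝ) + 1 := by
        have h1 : k * s ≤ k * ε := mul_le_mul_of_nonneg_left hs2 hk.le
        have h2 : (k*s)^2 ≤ 1 := by nlinarith [mul_nonneg hk.le hs0.le]
        have : (0:ℝ) ≤ n := Nat.cast_nonneg n
        linarith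
      have hlow := besselJ_lower n (k*s) (by positivity) hks
      have hmono : b ≤ (k*s/2)^n / n.factorial / 2 := by
        have : (0:ℝ) < (n.factorial : ℝ) := by exact_mod_cast Nat.factorial_pos n
        rw [hbdef]
        have h5 : k*(ε/2) ≤ k*s := by nlinarith
        have h6 : (0:ℝ) ≤ k*(ε/2) := by positivity
        gcongr
      have hb2 : b ≤ besselJ n (k*s) := le_trans hmono hlow
      have hsq : b^2 ≤ (besselJ n (k*s))^2 := pow_le_pow_left₀ hb.le hb2 2
      have : ε/2 ≤ s := hs1
      nlinarith [hb.le, hsq]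
    have hsplit : (∫ s in (0:ℝ)..δ, (besselJ n (k*s))^2 * s)
        = (∫ s in (0:ℝ)..(ε/2), (besselJ n (k*s))^2 * s)
          + ((∫ s in (ε/2)..ε, (besselJ n (k*s))^2 * s)
          + (∫ s in ε..δ, (besselJ n (k*s))^2 * s)) := by
      rw [intervalIntegral.integral_add_adjacent_intervals (hint n (ε/2) ε (by positivity) (by linarith))
        (hint n ε δ hε0.le hεδ),
        intervalIntegral.integral_add_adjacent_intervals (hint n 0 (ε/2) le_rfl (by positivity))
        (hint n (ε/2) δ (by positivity) (by linarith))]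
    rw [hsplit]
    have h1 := hnonneg n 0 (ε/2) le_rfl (by positivity)
    have h3 := hnonneg n ε δ hε0.le hεδ
    have : 0 < b^2 * (ε/2) * (ε - ε/2) := by
      have : 0 < ε - ε/2 := by linarith
      positivity
    linarith
  have hge : ∀ n : ℕ, (∫ s in (0:ℝ)..δ, (besselJ n (k*s))^2 * s)
      ≤ ∫ s in (0:ℝ)..r, (besselJ n (k*s))^2 * s := by
    intro n
    rw [← intervalIntegral.integral_add_adjacent_intervals (hint n 0 δ le_rfl hδ.le)
      (hint n δ r hδ.le hr.le)]
    have := hnonneg n δ r hδ.le hr.le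
    linarith
  have part1 : ∀ n : ℕ,
      1 ≤ (∫ s in (0 : ℝ)..r, (besselJ n (k * s)) ^ 2 * s) /
            (∫ s in (0 : ℝ)..δ, (besselJ n (k * s)) ^ 2 * s) :=
    fun n => (one_le_div (hden n)).mpr (hge n)
  refine ⟨part1, ?_⟩
  -- part 2
  set E : ℝ := ∑' m : ℕ, ((k*r)^2/4)^m / m.factorial with hEdef
  have hE1 : (1:ℝ) ≤ E := one_le_expS _ (by positivity)
  have hE0 : (0:ℝ) < E := lt_of_lt_of_le one_pos hE1
  set N : ℕ := Nat.ceil ((k*r)^2) with hNdef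
  have hrδ1 : (1:ℝ) ≤ r/δ := by rw [le_div_iff₀ hδ]; linarith
  set c₀ : ℝ := 1/(4*E^2) with hc₀
  set c₁ : ℝ := (δ/r)^(2*N) with hc₁
  have hc₀0 : 0 < c₀ := by positivity
  have hc₁0 : 0 < c₁ := by positivity
  refine ⟨min c₀ c₁, lt_min hc₀0 hc₁0, ?_⟩
  intro n _
  by_cases hn : N ≤ n
  · -- large n : use series bounds
    have hkr2 : (k*r)^2 ≤ (n:ℝ) + 1 := by
      calc (k*r)^2 ≤ (N:ℝ) := Nat.le_ceil _
        _ ≤ (n:ℝ) := by exact_mod_cast hn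
        _ ≤ (n:ℝ) + 1 := by linarith
    set P : ℝ := (k/2)^(2*n) / ((n.factorial : ℝ))^2 with hPdef
    have hnf : (0:ℝ) < (n.factorial : ℝ) := by exact_mod_cast Nat.factorial_pos n
    have hP0 : 0 < P := by positivity
    set A : ℝ := P/4 * (r^(2*n+2)/(2*n+2)) with hAdef
    set B : ℝ := P*E^2 * (δ^(2*n+2)/(2*n+2)) with hBdef
    have hA0 : 0 < A := by positivity
    -- lower bound the numerator
    have hnum : A ≤ ∫ s in (0:ℝ)..r, (besselJ n (k*s))^2 * s := by
      have hc : ∫ s in (0:ℝ)..r, (P/4 * s^(2*n+1)) = A := by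
        rw [intervalIntegral.integral_const_mul, integral_pow]
        rw [hAdef]
        rw [zero_pow (by omega)]
        push_cast
        ring
      rw [← hc]
      apply intervalIntegral.integral_mono_on hr0.le
        ((continuous_const.mul (continuous_pow _)).intervalIntegrable 0 r)
        (hint n 0 r le_rfl hr0.le)
      intro s hs
      have hs0 : 0 ≤ s := hs.1
      have hsr : s ≤ r := hs.2
      have hks : (k*s)^2 ≤ (n:ℝ) + 1 := by
        have h1 : k * s ≤ k * r := mul_le_mul_of_nonneg_left hsr hk.le
        nlinarith [mul_nonneg hk.le hs0]
      have hlow := besselJ_lower n (k*s) (by positivity) hks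
      have hq0 : (0:ℝ) ≤ (k*s/2)^n / n.factorial / 2 := by positivity
      have hsq : ((k*s/2)^n / n.factorial / 2)^2 ≤ (besselJ n (k*s))^2 :=
        pow_le_pow_left₀ hq0 hlow 2
      calc P/4 * s^(2*n+1) = ((k*s/2)^n / n.factorial / 2)^2 * s := by
            rw [hPdef]
            field_simp
            ring
        _ ≤ (besselJ n (k*s))^2 * s := by
            apply mul_le_mul_of_nonneg_right hsq hs0
    -- upper bound the denominator
    have hdenB : (∫ s in (0:ℝ)..δ, (besselJ n (k*s))^2 * s) ≤ B := by
      have hc : ∫ s in (0:ℝ)..δ, (P*E^2 * s^(2*n+1)) = B := by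
        rw [intervalIntegral.integral_const_mul, integral_pow]
        rw [hBdef, zero_pow (by omega)]
        push_cast
        ring
      rw [← hc]
      apply intervalIntegral.integral_mono_on hδ.le
        (hint n 0 δ le_rfl hδ.le)
        ((continuous_const.mul (continuous_pow _)).intervalIntegrable 0 δ)
      intro s hs
      have hs0 : 0 ≤ s := hs.1
      have hsδ : s ≤ δ := hs.2
      have hsr : s ≤ r := by linarith
      have hub : |besselJ n (k*s)| ≤ (k*s/2)^n / n.factorial * E := by
        apply besselJ_abs_le n (k*s) ((k*r)^2/4) (by positivity)
        have h1 : k * s ≤ k * r := mul_le_mul_of_nonneg_left hsr hk.le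
        have h2 : 0 ≤ k * s := mul_nonneg hk.le hs0
        gcongr
      have hsq : (besselJ n (k*s))^2 ≤ ((k*s/2)^n / n.factorial * E)^2 := by
        rw [← sq_abs (besselJ n (k*s))]
        exact pow_le_pow_left₀ (abs_nonneg _) hub 2
      calc (besselJ n (k*s))^2 * s ≤ ((k*s/2)^n / n.factorial * E)^2 * s :=
            mul_le_mul_of_nonneg_right hsq hs0
        _ = P*E^2 * s^(2*n+1) := by
            rw [hPdef]
            field_simp
            ring
    -- combine
    have hkey : c₀ * (r/δ)^(2*n) * B ≤ A := by
      have hLHS : c₀ * (r/δ)^(2*n) * B = P/4 * (r^(2*n)/(2*n+2)) * δ^2 := by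
        rw [hc₀, hBdef, div_pow]
        field_simp
        ring
      have hRHS : A = P/4 * (r^(2*n)/(2*n+2)) * r^2 := by
        rw [hAdef, pow_add]
        ring
      rw [hLHS, hRHS]
      have : δ^2 ≤ r^2 := by nlinarith
      have h2n2 : (0:ℝ) < 2*(n:ℝ)+2 := by positivity
      gcongr
    rw [le_div_iff₀ (hden n)]
    calc min c₀ c₁ * (r/δ)^(2*n) * (∫ s in (0:ℝ)..δ, (besselJ n (k*s))^2 * s)
        ≤ c₀ * (r/δ)^(2*n) * B := by
          apply mul_le_mul (mul_le_mul_of_nonneg_right (min_le_left _ _) (by positivity))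
            hdenB (hden n).le (by positivity)
      _ ≤ A := hkey
      _ ≤ _ := hnum
  · -- small n : use part 1
    push_neg at hn
    have h1 : min c₀ c₁ * (r/δ)^(2*n) ≤ 1 := by
      calc min c₀ c₁ * (r/δ)^(2*n) ≤ c₁ * (r/δ)^(2*N) := by
            apply mul_le_mul (min_le_right _ _)
              (pow_le_pow_right₀ hrδ1 (by omega)) (by positivity) hc₁0.le
        _ = ((δ/r)*(r/δ))^(2*N) := by rw [hc₁, mul_pow]
        _ = 1 := by
            rw [div_mul_div_comm, mul_comm δ r, div_self (by positivity), one_pow]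
    exact le_trans h1 (part1 n)
end
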